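/- The number of Grand Motzkin paths of length n equals Σ_{k=0}^{⌊n/2⌋} (number of (2k+1)-tuples of Motzkin paths whose lengths sum to n - 2k), summed over all k; i.e., #GrandMotzkin(n) = Σ_{k} Σ_{(n_1,...,n_{2k+1}): Σ n_i = n-2k} M_{n_1}···M_{n_{2k+1}}. -/

import Mathlib

open PowerSeries Finset

namespace GrandMotzkinAux

/-- The Motzkin number generating function (as a power series over ℤ). -/
noncomputable def MM (M : ℕ → ℕ) : PowerSeries ℤ := PowerSeries.mk fun n => (M n : ℤ)

lemma key1 (M : ℕ → ℕ) (h0 : M 0 = 1)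
    (hrec : ∀ n, M (n + 1) = M n + ∑ k ∈ Finset.range n, M k * M (n - 1 - k)) :
    MM M = 1 + X * MM M + X ^ 2 * (MM M * MM M) := by
  ext n
  rcases n with _ | n
  · simp [MM, h0, coeff_zero_eq_constantCoeff, constantCoeff_X]
  · rw [map_add, map_add, coeff_succ_X_mul, coeff_X_pow_mul']
    rcases n with _ | m
    · simp [MM, hrec 0]
    · have h2 : (2 : ℕ) ≤ m + 1 + 1 := by omega
      rw [if_pos h2]
      have : m + 1 + 1 - 2 = m := by omega
      rw [this]
      have hc : (coeff m) (MM M * MM M)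
          = ∑ k ∈ Finset.range (m + 1), ((M k : ℤ) * (M (m - k) : ℤ)) := by
        rw [PowerSeries.coeff_mul, Finset.Nat.sum_antidiagonal_eq_sum_range_succ_mk]
        simp [MM]
      have h1 : (coeff (m+1+1)) (1 : PowerSeries ℤ) = 0 := by
        simp
      rw [h1, hc]
      simp only [MM, coeff_mk]
      rw [hrec (m+1)]
      push_cast
      ring

/-- Truncated geometric-type sum `∑_{k ≤ N} X^{2k} M^{2k+1}`. -/
noncomputable def Sf (M : ℕ → ℕ) (N : ℕ) : PowerSeries ℤ :=
  ∑ k ∈ Finset.range (N + 1), X ^ (2 * k) * (MM M) ^ (2 * k + 1)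

lemma Sf_telescope (M : ℕ → ℕ) (N : ℕ) :
    Sf M N * (1 - X ^ 2 * (MM M) ^ 2)
      = MM M - X ^ (2 * N + 2) * (MM M) ^ (2 * N + 3) := by
  induction N with
  | zero =>
    simp only [Sf, Finset.sum_range_one, mul_zero, pow_zero, zero_add, pow_one, one_mul]
    ring
  | succ N ih =>
    have h : Sf M (N + 1) = Sf M N + X ^ (2 * (N+1)) * (MM M) ^ (2 * (N+1) + 1) := by
      simp [Sf, Finset.sum_range_succ]
    rw [h, add_mul, ih]
    ring

lemma Sf_rel (M : ℕ → ℕ) (h0 : M 0 = 1)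
    (hrec : ∀ n, M (n + 1) = M n + ∑ k ∈ Finset.range n, M k * M (n - 1 - k))
    (N : ℕ) :
    ∃ q : PowerSeries ℤ, Sf M N
      = 1 + X * (X * MM M * Sf M N + Sf M N + X * MM M * Sf M N) + X ^ (2 * N + 2) * q := by
  have hM := key1 M h0 hrec
  have hT := Sf_telescope M N
  have hu : IsUnit (1 - X ^ 2 * (MM M) ^ 2) := by
    rw [PowerSeries.isUnit_iff_constantCoeff]
    have : constantCoeff (1 - X ^ 2 * (MM M) ^ 2) = 1 := by
      simp [map_sub, map_mul, map_pow, constantCoeff_X]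
    rw [this]; exact isUnit_one
  obtain ⟨v, hv⟩ := hu.exists_right_inv
  set T : PowerSeries ℤ := X ^ (2 * N + 2) * (MM M) ^ (2 * N + 3) with hTdef
  have hE : (Sf M N - (1 + X * (X * MM M * Sf M N + Sf M N + X * MM M * Sf M N)))
        * (1 - X ^ 2 * (MM M) ^ 2)
      = T * (X + 2 * X ^ 2 * MM M - 1) := by
    linear_combination (1 - X - 2 * X ^ 2 * MM M) * hT + hM
  refine ⟨(MM M) ^ (2 * N + 3) * ((X + 2 * X ^ 2 * MM M - 1) * v), ?_⟩
  linear_combination v * hE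
    - (Sf M N - (1 + X * (X * MM M * Sf M N + Sf M N + X * MM M * Sf M N))) * hv

lemma coeff_Sf (M : ℕ → ℕ) (n N : ℕ) (h : n ≤ 2 * N + 1) :
    (coeff n) (Sf M N)
      = ∑ k ∈ Finset.range (n / 2 + 1), (coeff (n - 2 * k)) ((MM M) ^ (2 * k + 1)) := by
  rw [Sf, map_sum]
  rw [Finset.sum_congr rfl (fun k _ => coeff_X_pow_mul' ((MM M) ^ (2*k+1)) (2*k) n)]
  rw [Finset.sum_ite, Finset.sum_const_zero, add_zero]
  apply Finset.sum_congr
  · ext k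
    simp only [Finset.mem_filter, Finset.mem_range]
    omega
  · intro k _; rfl

lemma X_pow_dvd_Sf_sub (M : ℕ → ℕ) {N N' : ℕ} (h : N ≤ N') :
    (X : PowerSeries ℤ) ^ (2 * N + 2) ∣ (Sf M N' - Sf M N) := by
  have : Sf M N' - Sf M N
      = ∑ k ∈ Finset.Ico (N + 1) (N' + 1), X ^ (2 * k) * (MM M) ^ (2 * k + 1) := by
    rw [Sf, Sf, ← Finset.sum_Ico_eq_sub _ (by omega)]
  rw [this]
  apply Finset.dvd_sum
  intro k hk
  rw [Finset.mem_Ico] at hk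
  have h2 : 2 * N + 2 ≤ 2 * k := by omega
  exact Dvd.dvd.mul_right (pow_dvd_pow X h2) _

lemma coeff_mul_Sf_stable (M : ℕ → ℕ) (p : PowerSeries ℤ) {n N N' : ℕ}
    (h : n ≤ 2 * N + 1) (h' : n ≤ 2 * N' + 1) :
    (coeff n) (p * Sf M N) = (coeff n) (p * Sf M N') := by
  wlog hle : N ≤ N' generalizing N N'
  · exact (this h' h (by omega)).symm
  have hd : (X : PowerSeries ℤ) ^ (2 * N + 2) ∣ p * Sf M N' - p * Sf M N := by
    rw [← mul_sub]
    exact Dvd.dvd.mul_left (X_pow_dvd_Sf_sub M hle) p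
  have h2 : (coeff n) (p * Sf M N' - p * Sf M N) = 0 :=
    (X_pow_dvd_iff.mp hd) n (by omega)
  rw [map_sub] at h2
  linarith [h2]

/-! ### Counting side -/

def step : Fin 3 → ℤ := ![-1, 0, 1]

noncomputable def G (n : ℕ) (m : ℤ) : ℕ :=
  Nat.card {c : Fin n → Fin 3 // ∑ i, step (c i) = m}

lemma G_zero (m : ℤ) : G 0 m = if m = 0 then 1 else 0 := by
  rw [G]
  by_cases hm : m = 0
  · subst hm
    rw [if_pos rfl, Nat.card_eq_one_iff_unique]
    constructor
    · constructor
      intro a b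
      ext i
      exact absurd i.2 (by omega)
    · exact ⟨⟨fun i => 0, by simp⟩⟩
  · rw [if_neg hm, Nat.card_eq_zero]
    left
    rw [isEmpty_subtype]
    intro c
    simp only [Finset.univ_eq_empty, Finset.sum_empty]
    omega

lemma G_succ (n : ℕ) (m : ℤ) :
    G (n + 1) m = G n (m + 1) + G n m + G n (m - 1) := by
  have e : {c : Fin (n+1) → Fin 3 // ∑ i, step (c i) = m}
      ≃ Σ t : Fin 3, {c : Fin n → Fin 3 // ∑ i, step (c i) = m - step t} :=
    ((Fin.consEquiv (fun _ : Fin (n+1) => Fin 3)).symm.subtypeEquiv (fun c => by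
        rw [Fin.sum_univ_succ]
        exact Iff.rfl)).trans
      ((Equiv.subtypeProdEquivSigmaSubtype
          (fun (t : Fin 3) (c : Fin n → Fin 3) => step t + ∑ i, step (c i) = m)).trans
        (Equiv.sigmaCongrRight (fun t =>
          Equiv.subtypeEquiv (Equiv.refl _) (fun c => by
            simp only [Equiv.refl_apply]
            omega))))
  rw [G, Nat.card_congr e, Nat.card_eq_fintype_card, Fintype.card_sigma, Fin.sum_univ_three]
  rw [← Nat.card_eq_fintype_card, ← Nat.card_eq_fintype_card, ← Nat.card_eq_fintype_card]
  have h0 : m - step 0 = m + 1 := by rw [show step 0 = -1 from rfl]; ring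
  have h1 : m - step 1 = m := by rw [show step 1 = 0 from rfl]; ring
  have h2 : m - step 2 = m - 1 := by rw [show step 2 = 1 from rfl]
  rw [h0, h1, h2]
  rfl

/-! ### Main induction -/

lemma stabF (M : ℕ → ℕ) (a n : ℕ) :
    (coeff n) (X ^ a * (MM M) ^ a * Sf M (n + 1))
      = (coeff n) (X ^ a * (MM M) ^ a * Sf M n) := by
  exact coeff_mul_Sf_stable M (X ^ a * (MM M) ^ a) (by omega) (by omega)

lemma F_rel (M : ℕ → ℕ) (h0 : M 0 = 1)
    (hrec : ∀ n, M (n + 1) = M n + ∑ k ∈ Finset.range n, M k * M (n - 1 - k))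
    (b N : ℕ) :
    X ^ (b+1) * (MM M) ^ (b+1) * Sf M N
      = X * (X ^ b * (MM M) ^ b * Sf M N + X ^ (b+1) * (MM M) ^ (b+1) * Sf M N
          + X ^ (b+2) * (MM M) ^ (b+2) * Sf M N) := by
  have hM := key1 M h0 hrec
  linear_combination (X ^ (b+1) * (MM M) ^ b * Sf M N) * hM

lemma G_eq (M : ℕ → ℕ) (h0 : M 0 = 1)
    (hrec : ∀ n, M (n + 1) = M n + ∑ k ∈ Finset.range n, M k * M (n - 1 - k)) :
    ∀ n (m : ℤ), (G n m : ℤ)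
      = (coeff n) (X ^ m.natAbs * (MM M) ^ m.natAbs * Sf M n) := by
  intro n
  induction n with
  | zero =>
    intro m
    rw [G_zero]
    by_cases hm : m = 0
    · subst hm
      rw [if_pos rfl]
      simp only [Int.natAbs_zero, pow_zero, one_mul]
      have : Sf M 0 = MM M := by
        simp [Sf, Finset.sum_range_one]
      rw [this]
      simp [MM, h0, coeff_zero_eq_constantCoeff]
    · rw [if_neg hm]
      have ha : 1 ≤ m.natAbs := by omega
      rw [mul_assoc, coeff_X_pow_mul', if_neg (by omega)]
      simp
  | succ n ih =>
    intro m
    rw [G_succ]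
    rcases lt_trichotomy m 0 with hm | hm | hm
    · -- m < 0
      obtain ⟨b, hb⟩ : ∃ b : ℕ, m.natAbs = b + 1 := ⟨m.natAbs - 1, by omega⟩
      have h1 : (m + 1).natAbs = b := by omega
      have h2 : (m - 1).natAbs = b + 2 := by omega
      rw [hb]
      rw [F_rel M h0 hrec b (n+1), coeff_succ_X_mul, map_add, map_add]
      rw [stabF, stabF, stabF]
      push_cast
      rw [ih (m+1), ih m, ih (m-1), h1, h2, hb]
      try ring
    · -- m = 0
      subst hm
      simp only [Int.natAbs_zero, pow_zero, one_mul]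
      obtain ⟨q, hq⟩ := Sf_rel M h0 hrec (n+1)
      rw [hq, map_add, map_add, coeff_succ_X_mul]
      have hone : (coeff (n+1)) (1 : PowerSeries ℤ) = 0 := by simp
      have hqq : (coeff (n+1)) (X ^ (2*(n+1)+2) * q) = 0 := by
        rw [coeff_X_pow_mul', if_neg (by omega)]
      rw [hone, hqq, map_add, map_add]
      have stab1 : (coeff n) (X * MM M * Sf M (n+1)) = (coeff n) (X * MM M * Sf M n) :=
        coeff_mul_Sf_stable M (X * MM M) (by omega) (by omega)
      have stab0 : (coeff n) (Sf M (n+1)) = (coeff n) (Sf M n) := by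
        have := coeff_mul_Sf_stable M 1 (n := n) (N := n+1) (N' := n) (by omega) (by omega)
        simpa using this
      rw [stab1, stab0]
      push_cast
      rw [ih 1, ih 0, ih (-1)]
      simp only [Int.natAbs_one, Int.natAbs_zero, Int.natAbs_neg, pow_zero, one_mul, pow_one]
      ring
    · -- m > 0
      obtain ⟨b, hb⟩ : ∃ b : ℕ, m.natAbs = b + 1 := ⟨m.natAbs - 1, by omega⟩
      have h1 : (m + 1).natAbs = b + 2 := by omega
      have h2 : (m - 1).natAbs = b := by omega
      rw [hb]
      rw [F_rel M h0 hrec b (n+1), coeff_succ_X_mul, map_add, map_add]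
      rw [stabF, stabF, stabF]
      push_cast
      rw [ih (m+1), ih m, ih (m-1), h1, h2, hb]
      try ring

/-! ### Coefficients of powers via antidiagonal tuples -/

lemma coeff_pow_tuple (φ : PowerSeries ℤ) (j d : ℕ) :
    (coeff d) (φ ^ j)
      = ∑ c ∈ Finset.Nat.antidiagonalTuple j d, ∏ i, (coeff (c i)) φ := by
  induction j generalizing d with
  | zero =>
    rcases d with _ | d
    · simp
    · simp
  | succ j ih =>
    rw [pow_succ', PowerSeries.coeff_mul]
    rw [Finset.sum_congr rfl (fun p _ => by rw [ih p.2])]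
    simp_rw [Finset.mul_sum]
    rw [Finset.sum_sigma']
    refine Finset.sum_nbij' (fun x => Fin.cons x.1.1 x.2)
      (fun c : Fin (j+1) → ℕ => ⟨(c 0, ∑ i : Fin j, c i.succ), Fin.tail c⟩) ?_ ?_ ?_ ?_ ?_
    · rintro ⟨⟨a, b⟩, c⟩ hx
      simp only [Finset.mem_sigma, Finset.mem_antidiagonal,
        Finset.Nat.mem_antidiagonalTuple] at hx
      rw [Finset.Nat.mem_antidiagonalTuple, Fin.sum_cons, hx.2, Finset.HasAntidiagonal.mem_antidiagonal.mp hx.1]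
    · intro c hc
      rw [Finset.Nat.mem_antidiagonalTuple] at hc
      simp only [Finset.mem_sigma, Finset.mem_antidiagonal,
        Finset.Nat.mem_antidiagonalTuple]
      exact ⟨Finset.HasAntidiagonal.mem_antidiagonal.mpr (by rw [← hc, Fin.sum_univ_succ]), rfl⟩
    · rintro ⟨⟨a, b⟩, c⟩ hx
      simp only [Finset.mem_sigma, Finset.mem_antidiagonal,
        Finset.Nat.mem_antidiagonalTuple] at hx
      simp [Fin.cons_zero, Fin.cons_succ, Fin.tail_cons, hx.2]
    · intro c hc
      exact Fin.cons_self_tail c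
    · rintro ⟨⟨a, b⟩, c⟩ hx
      rw [Fin.prod_univ_succ]
      simp [Fin.cons_zero, Fin.cons_succ]

end GrandMotzkinAux

/-- The number of Grand Motzkin paths of length n equals the sum over k of the number
of (2k+1)-tuples of Motzkin paths with total length n - 2k, counted by Motzkin numbers. -/
theorem grand_motzkin_count_decomposition
    (M : ℕ → ℕ) (h0 : M 0 = 1)
    (hrec : ∀ n, M (n + 1) = M n + ∑ k ∈ Finset.range n, M k * M (n - 1 - k))
    (n : ℕ) :
    Nat.card {s : Fin n → ℤ //
        (∀ i, s i = -1 ∨ s i = 0 ∨ s i = 1) ∧ (∑ i, s i) = 0}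
      = ∑ k ∈ Finset.range (n / 2 + 1),
          ∑ c ∈ Finset.Nat.antidiagonalTuple (2 * k + 1) (n - 2 * k),
            ∏ i, M (c i) := by
  classical
  set val : ℤ → Fin 3 := fun z => if z = -1 then 0 else if z = 0 then 1 else 2 with hval
  have hsv : ∀ z : ℤ, (z = -1 ∨ z = 0 ∨ z = 1) → GrandMotzkinAux.step (val z) = z := by
    rintro z (rfl | rfl | rfl) <;> simp [hval, GrandMotzkinAux.step]
  have hvs : ∀ t : Fin 3, val (GrandMotzkinAux.step t) = t := by decide
  have hmem : ∀ t : Fin 3,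
      (GrandMotzkinAux.step t = -1 ∨ GrandMotzkinAux.step t = 0 ∨ GrandMotzkinAux.step t = 1) := by
    decide
  have e : {s : Fin n → ℤ //
        (∀ i, s i = -1 ∨ s i = 0 ∨ s i = 1) ∧ (∑ i, s i) = 0}
      ≃ {c : Fin n → Fin 3 // ∑ i, GrandMotzkinAux.step (c i) = 0} :=
    { toFun := fun s => ⟨fun i => val (s.1 i),
        (Finset.sum_congr rfl fun i _ => hsv (s.1 i) (s.2.1 i)).trans s.2.2⟩,
      invFun := fun c => ⟨fun i => GrandMotzkinAux.step (c.1 i), ⟨fun i => hmem _, c.2⟩⟩,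
      left_inv := fun s => Subtype.ext (funext fun i => hsv (s.1 i) (s.2.1 i)),
      right_inv := fun c => Subtype.ext (funext fun i => hvs (c.1 i)) }
  rw [Nat.card_congr e]
  have hG := GrandMotzkinAux.G_eq M h0 hrec n 0
  simp only [Int.natAbs_zero, pow_zero, one_mul] at hG
  rw [GrandMotzkinAux.coeff_Sf M n n (by omega)] at hG
  have hco : ∀ k, (PowerSeries.coeff (n - 2*k)) ((GrandMotzkinAux.MM M) ^ (2*k+1))
      = ∑ c ∈ Finset.Nat.antidiagonalTuple (2*k+1) (n - 2*k), ∏ i, (M (c i) : ℤ) := by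
    intro k
    rw [GrandMotzkinAux.coeff_pow_tuple]
    refine Finset.sum_congr rfl fun c _ => Finset.prod_congr rfl fun i _ => ?_
    simp [GrandMotzkinAux.MM]
  rw [Finset.sum_congr rfl (fun k _ => hco k)] at hG
  have key : (Nat.card {c : Fin n → Fin 3 // ∑ i, GrandMotzkinAux.step (c i) = 0} : ℤ)
      = ((∑ k ∈ Finset.range (n / 2 + 1),
          ∑ c ∈ Finset.Nat.antidiagonalTuple (2 * k + 1) (n - 2 * k),
            ∏ i, M (c i) : ℕ) : ℤ) := by
    push_cast
    exact hG
  exact_mod_cast key
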